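/- Let τ ∈ ℂ with Im τ > 0 and let f : ℂ → ℂ be an entire (everywhere complex-differentiable) function satisfying f(z+1) = f(z) and f(z+τ) = −e^{−2πiz} f(z) for all z ∈ ℂ. Then there exists a constant c ∈ ℂ such that f(z) = c · φ(τ, z) for all z ∈ ℂ. -/

import Mathlib

set_option maxHeartbeats 1000000

/-- The theta-like function
`φ(τ, z) = (q_z − 1) · ∏_{n ≥ 1} (1 − qⁿ q_z)(1 − qⁿ q_z⁻¹)`,
where `q = e^{2πiτ}` and `q_z = e^{2πiz}`. -/
noncomputable def phi (τ z : ℂ) : ℂ :=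
  (Complex.exp (2 * Real.pi * Complex.I * z) - 1) *
    ∏' n : ℕ,
      ((1 - Complex.exp (2 * Real.pi * Complex.I * τ) ^ (n + 1) *
          Complex.exp (2 * Real.pi * Complex.I * z)) *
        (1 - Complex.exp (2 * Real.pi * Complex.I * τ) ^ (n + 1) *
          (Complex.exp (2 * Real.pi * Complex.I * z))⁻¹))

open Complex MeasureTheory intervalIntegral Filter Function Finset

section Aux

theorem integral_shift (g : ℂ → ℂ) (hg : Differentiable ℂ g)
    (hper : ∀ z : ℂ, g (z + 1) = g z) (w : ℂ) :
    ∫ x in (0:ℝ)..1, g (x + w) = ∫ x in (0:ℝ)..1, g x := by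
  have key : ∀ t : ℝ, ∫ x in (0:ℝ)..1, g (x + t * I) = ∫ x in (0:ℝ)..1, g x := by
    intro t
    have h := Complex.integral_boundary_rect_eq_zero_of_continuousOn_of_differentiableOn g 0
      (1 + t * I) hg.continuous.continuousOn (hg.differentiableOn)
    simp only [Complex.zero_re, Complex.zero_im, Complex.add_re, Complex.one_re,
      Complex.mul_re, Complex.I_re, Complex.I_im, Complex.ofReal_re, Complex.ofReal_im,
      Complex.add_im, Complex.one_im, Complex.mul_im] at h
    norm_num at h
    have hvert : (∫ y in (0:ℝ)..t, g (1 + y * I)) = ∫ y in (0:ℝ)..t, g (y * I) := by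
      refine intervalIntegral.integral_congr fun y _ => ?_
      have e : (1 : ℂ) + y * I = ((y:ℂ) * I) + 1 := by ring
      rw [e, hper]
    rw [hvert] at h
    linear_combination -h
  have horiz : ∀ (s t : ℝ), ∫ x in (0:ℝ)..1, g (x + (s + t * I)) =
      ∫ x in (0:ℝ)..1, g (x + t * I) := by
    intro s t
    have hper' : Function.Periodic (fun x : ℝ => g (x + t * I)) 1 := by
      intro x
      have e : ((x : ℝ) + 1 : ℝ) + (t:ℂ) * I = ((x : ℂ) + t * I) + 1 := by push_cast; ring
      simp only [e, hper]
    have A := intervalIntegral.integral_comp_add_right (a := (0:ℝ)) (b := 1)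
      (fun y : ℝ => g (y + t * I)) s
    have B := hper'.intervalIntegral_add_eq s 0
    calc ∫ x in (0:ℝ)..1, g (↑x + (↑s + ↑t * I))
        = ∫ x in (0:ℝ)..1, (fun y : ℝ => g (y + t * I)) (x + s) := by
          refine intervalIntegral.integral_congr fun x _ => ?_
          show g _ = g _
          congr 1
          push_cast; ring
      _ = ∫ x in (0:ℝ)+s..(1:ℝ)+s, (fun y : ℝ => g (y + t * I)) x := A
      _ = ∫ x in (0:ℝ)..1, g (x + t * I) := by
          rw [zero_add, add_comm]
          simpa using B
  have hw : (w.re : ℂ) + w.im * I = w := Complex.re_add_im w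
  calc ∫ x in (0:ℝ)..1, g (x + w) = ∫ x in (0:ℝ)..1, g (x + (↑w.re + ↑w.im * I)) := by rw [hw]
    _ = ∫ x in (0:ℝ)..1, g (x + w.im * I) := horiz w.re w.im
    _ = ∫ x in (0:ℝ)..1, g x := key w.im

theorem fourier_unique {G : ℝ → ℂ} (hGc : Continuous G) (hGp : Function.Periodic G 1)
    (h0 : ∀ n : ℤ, (∫ x in (0:ℝ)..1, G x * Complex.exp (-(2 * Real.pi * Complex.I * n * x))) = 0)
    (x : ℝ) : G x = 0 := by
  haveI : Fact (0 < (1:ℝ)) := ⟨one_pos⟩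
  have hlc : Continuous hGp.lift := by
    unfold Function.Periodic.lift
    exact hGc.quotient_liftOn' _
  set g : C(AddCircle (1:ℝ), ℂ) := ⟨hGp.lift, hlc⟩ with hg
  have hcoeff : ∀ n : ℤ, fourierCoeff (g : AddCircle (1:ℝ) → ℂ) n = 0 := by
    intro n
    rw [fourierCoeff_eq_intervalIntegral _ n 0]
    rw [show (0:ℝ) + 1 = 1 by norm_num]
    rw [← h0 n]
    simp only [one_div, one_smul, smul_eq_mul]
    norm_num
    refine intervalIntegral.integral_congr fun y _ => ?_
    have h1 : (g : AddCircle (1:ℝ) → ℂ) (y : AddCircle (1:ℝ)) = G y := hGp.lift_coe y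
    have h2 : (starRingEnd ℂ) (cexp (2 * Real.pi * I * n * y)) =
        cexp (-(2 * Real.pi * I * n * y)) := by
      rw [← Complex.exp_conj]
      congr 1
      simp only [map_mul, Complex.conj_I, Complex.conj_ofReal, map_intCast, map_ofNat]
      ring
    rw [h1, h2, mul_comm]
  -- conclude g = 0 via the Hilbert basis
  have hL2 : (ContinuousMap.toLp (p := 2) (μ := AddCircle.haarAddCircle) ℂ g) = 0 := by
    have hrepr : fourierBasis.repr (ContinuousMap.toLp (p := 2) (μ := AddCircle.haarAddCircle) ℂ g) = 0 := by
      ext n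
      rw [fourierBasis_repr]
      rw [fourierCoeff_toLp]
      simpa using hcoeff n
    have := fourierBasis.repr.map_eq_zero_iff.mp hrepr
    exact this
  have hae : (g : AddCircle (1:ℝ) → ℂ) =ᵐ[AddCircle.haarAddCircle] 0 := by
    have h1 := ContinuousMap.coeFn_toLp (p := 2) (𝕜 := ℂ) (AddCircle.haarAddCircle (T := 1)) g
    rw [hL2] at h1
    have h2 := MeasureTheory.Lp.coeFn_zero ℂ 2 (AddCircle.haarAddCircle (T := 1))
    exact (h1.symm.trans h2)
  have : (g : AddCircle (1:ℝ) → ℂ) = 0 :=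
    (Continuous.ae_eq_iff_eq AddCircle.haarAddCircle g.continuous continuous_const).mp hae
  have := congrFun this (x : AddCircle (1:ℝ))
  rw [show (g : AddCircle (1:ℝ) → ℂ) (x : AddCircle (1:ℝ)) = G x from hGp.lift_coe x] at this
  simpa using this

noncomputable def thetaCoeff (f : ℂ → ℂ) (n : ℤ) : ℂ :=
  ∫ x in (0:ℝ)..1, f x * Complex.exp (-(2 * Real.pi * Complex.I * n * x))

lemma exp_factor_periodic (n : ℤ) (z : ℂ) :
    Complex.exp (-(2 * Real.pi * Complex.I * n * (z + 1))) =
      Complex.exp (-(2 * Real.pi * Complex.I * n * z)) := by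
  have : -(2 * (Real.pi:ℂ) * Complex.I * n * (z + 1)) =
      -(2 * Real.pi * Complex.I * n * z) + (-n : ℤ) * (2 * Real.pi * Complex.I) := by
    push_cast; ring
  rw [this, Complex.exp_add, Complex.exp_int_mul_two_pi_mul_I, mul_one]

lemma exp_factor_diff (n : ℤ) : Differentiable ℂ
    (fun z : ℂ => Complex.exp (-(2 * Real.pi * Complex.I * n * z))) := by
  apply Complex.differentiable_exp.comp
  exact ((differentiable_const _).mul differentiable_id).neg

lemma thetaCoeff_shift (f : ℂ → ℂ) (hf : Differentiable ℂ f)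
    (h1 : ∀ z : ℂ, f (z + 1) = f z) (n : ℤ) (w : ℂ) :
    ∫ x in (0:ℝ)..1, f (x + w) * Complex.exp (-(2 * Real.pi * Complex.I * n * (x + w))) =
      thetaCoeff f n := by
  exact integral_shift (fun z => f z * Complex.exp (-(2 * Real.pi * Complex.I * n * z)))
    (hf.mul (exp_factor_diff n))
    (fun z => by
      show f (z + 1) * _ = _
      rw [h1 z, exp_factor_periodic]) w

lemma eq_zero_of_thetaCoeff_eq_zero (f : ℂ → ℂ) (hf : Differentiable ℂ f)
    (h1 : ∀ z : ℂ, f (z + 1) = f z) (hc : ∀ n : ℤ, thetaCoeff f n = 0) (z : ℂ) :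
    f z = 0 := by
  set G : ℝ → ℂ := fun x : ℝ => f (x + z.im * I) with hG
  have hGc : Continuous G := hf.continuous.comp (by continuity)
  have hGp : Function.Periodic G 1 := by
    intro x
    have e : ((x:ℝ) + 1 : ℝ) + (z.im:ℂ) * I = ((x:ℂ) + z.im * I) + 1 := by push_cast; ring
    simp only [hG, e, h1]
  have h0 : ∀ n : ℤ, (∫ x in (0:ℝ)..1, G x * Complex.exp (-(2 * Real.pi * Complex.I * n * x))) = 0 := by
    intro n
    have hs := thetaCoeff_shift f hf h1 n ((z.im : ℂ) * I)
    rw [hc n] at hs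
    have hsplit : ∀ x : ℝ, f (x + z.im * I) * Complex.exp (-(2 * Real.pi * Complex.I * n * (x + z.im * I)))
        = (G x * Complex.exp (-(2 * Real.pi * Complex.I * n * x))) *
          Complex.exp (-(2 * Real.pi * Complex.I * n * ((z.im : ℂ) * I))) := by
      intro x
      have e : Complex.exp (-(2 * Real.pi * Complex.I * n * x)) *
          Complex.exp (-(2 * Real.pi * Complex.I * n * ((z.im : ℂ) * I))) =
          Complex.exp (-(2 * Real.pi * Complex.I * n * ((x : ℂ) + z.im * I))) := by
        rw [← Complex.exp_add]; congr 1; push_cast; ring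
      rw [← e]
      simp only [hG]
      ring
    rw [intervalIntegral.integral_congr (fun x _ => hsplit x)] at hs
    rw [intervalIntegral.integral_mul_const] at hs
    rcases mul_eq_zero.mp hs with h | h
    · exact h
    · exact absurd h (Complex.exp_ne_zero _)
  have := fourier_unique hGc hGp h0 z.re
  simp only [hG] at this
  rwa [Complex.re_add_im] at this

lemma thetaCoeff_rec (τ : ℂ) (f : ℂ → ℂ) (hf : Differentiable ℂ f)
    (h1 : ∀ z : ℂ, f (z + 1) = f z)
    (h2 : ∀ z : ℂ, f (z + τ) = -Complex.exp (-(2 * Real.pi * Complex.I * z)) * f z) (n : ℤ) :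
    thetaCoeff f n = -Complex.exp (-(2 * Real.pi * Complex.I * n * τ)) * thetaCoeff f (n + 1) := by
  have hs := thetaCoeff_shift f hf h1 n τ
  rw [← hs]
  have hsplit : ∀ x : ℝ, f (x + τ) * Complex.exp (-(2 * Real.pi * Complex.I * n * (x + τ)))
      = (f x * Complex.exp (-(2 * Real.pi * Complex.I * (n + 1 : ℤ) * x))) *
        (-Complex.exp (-(2 * Real.pi * Complex.I * n * τ))) := by
    intro x
    rw [h2]
    have : -Complex.exp (-(2 * Real.pi * Complex.I * x)) * f x *
        Complex.exp (-(2 * Real.pi * Complex.I * n * (x + τ)))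
        = -(f x * (Complex.exp (-(2 * Real.pi * Complex.I * x)) *
          Complex.exp (-(2 * Real.pi * Complex.I * n * (x + τ))))) := by ring
    rw [this, ← Complex.exp_add]
    have e2 : -(2 * (Real.pi:ℂ) * Complex.I * x) + -(2 * Real.pi * Complex.I * n * (x + τ))
        = -(2 * Real.pi * Complex.I * ((n:ℂ) + 1) * x) + -(2 * Real.pi * Complex.I * n * τ) := by
      ring
    rw [e2, Complex.exp_add]
    push_cast
    ring
  rw [intervalIntegral.integral_congr (fun x _ => hsplit x), intervalIntegral.integral_mul_const]
  rw [thetaCoeff]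
  ring

lemma thetaCoeff_all_zero (τ : ℂ) (f : ℂ → ℂ) (hf : Differentiable ℂ f)
    (h1 : ∀ z : ℂ, f (z + 1) = f z)
    (h2 : ∀ z : ℂ, f (z + τ) = -Complex.exp (-(2 * Real.pi * Complex.I * z)) * f z)
    (h00 : thetaCoeff f 0 = 0) : ∀ n : ℤ, thetaCoeff f n = 0 := by
  have hrec := thetaCoeff_rec τ f hf h1 h2
  have rec' : ∀ n : ℤ, thetaCoeff f (n + 1) =
      -Complex.exp (2 * Real.pi * Complex.I * n * τ) * thetaCoeff f n := by
    intro n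
    have e : Complex.exp (2 * Real.pi * Complex.I * n * τ) *
        Complex.exp (-(2 * Real.pi * Complex.I * n * τ)) = 1 := by
      rw [← Complex.exp_add, add_neg_cancel, Complex.exp_zero]
    calc thetaCoeff f (n + 1)
        = (Complex.exp (2 * Real.pi * Complex.I * n * τ) *
            Complex.exp (-(2 * Real.pi * Complex.I * n * τ))) * thetaCoeff f (n + 1) := by
          rw [e, one_mul]
      _ = -Complex.exp (2 * Real.pi * Complex.I * n * τ) *
            (-Complex.exp (-(2 * Real.pi * Complex.I * n * τ)) * thetaCoeff f (n + 1)) := by ring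
      _ = -Complex.exp (2 * Real.pi * Complex.I * n * τ) * thetaCoeff f n := by rw [← hrec n]
  intro n
  induction n using Int.induction_on with
  | zero => exact h00
  | succ k ih => rw [rec' k, ih, mul_zero]
  | pred k ih =>
    have h := hrec (-k - 1)
    have e : (-k - 1 + 1 : ℤ) = -k := by ring
    rw [e, ih, mul_zero] at h
    exact h

lemma norm_q_lt_one {τ : ℂ} (hτ : 0 < τ.im) : ‖Complex.exp (2 * Real.pi * Complex.I * τ)‖ < 1 := by
  rw [Complex.norm_exp]
  rw [Real.exp_lt_one_iff]
  have e : (2 * (Real.pi:ℂ) * Complex.I * τ).re = -(2 * Real.pi * τ.im) := by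
    simp [Complex.mul_re, Complex.mul_im]
  rw [e]
  have := Real.pi_pos
  nlinarith

lemma hasProd_zero_of_eq_zero {f : ℕ → ℂ} (k : ℕ) (hk : f k = 0) : HasProd f 0 := by
  rw [HasProd]
  have : ∀ᶠ s in (atTop : Filter (Finset ℕ)), ∏ i ∈ s, f i = 0 := by
    filter_upwards [Filter.eventually_ge_atTop ({k} : Finset ℕ)] with s hs
    exact Finset.prod_eq_zero (hs (Finset.mem_singleton_self k)) hk
  exact Tendsto.congr' (by filter_upwards [this] with s hs using hs.symm) tendsto_const_nhds

lemma summable_q_geom {τ : ℂ} (hτ : 0 < τ.im) (C : ℝ) :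
    Summable (fun n : ℕ => ‖Complex.exp (2 * Real.pi * Complex.I * τ)‖ ^ (n + 1) * C) := by
  apply Summable.mul_right
  exact (summable_geometric_of_lt_one (norm_nonneg _) (norm_q_lt_one hτ)).comp_injective
    (add_left_injective 1)

lemma summable_log_factor {τ : ℂ} (hτ : 0 < τ.im) (w : ℂ) :
    Summable (fun n : ℕ =>
      Complex.log (1 - Complex.exp (2 * Real.pi * Complex.I * τ) ^ (n + 1) * w)) := by
  set q := Complex.exp (2 * Real.pi * Complex.I * τ) with hq
  apply Summable.of_norm_bounded_eventually_nat (g := fun n => (3/2) * (‖q‖ ^ (n + 1) * ‖w‖))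
  · exact (summable_q_geom hτ ‖w‖).mul_left _
  · have htend : Tendsto (fun n : ℕ => ‖q‖ ^ (n + 1) * ‖w‖) atTop (nhds 0) := by
      have := (summable_q_geom hτ ‖w‖).tendsto_atTop_zero
      exact this
    have hev : ∀ᶠ n in atTop, ‖q‖ ^ (n + 1) * ‖w‖ ≤ 1/2 :=
      htend.eventually_le_const (by norm_num)
    filter_upwards [hev] with n hn
    have hnorm : ‖-(q ^ (n + 1) * w)‖ ≤ 1/2 := by
      rw [norm_neg, norm_mul, norm_pow]
      exact hn
    have := Complex.norm_log_one_add_half_le_self hnorm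
    rw [show (1 : ℂ) + -(q ^ (n+1) * w) = 1 - q ^ (n+1) * w by ring] at this
    apply this.trans
    rw [norm_neg, norm_mul, norm_pow]
lemma multipliable_factor {τ : ℂ} (hτ : 0 < τ.im) (w : ℂ) :
    Multipliable (fun n : ℕ =>
      1 - Complex.exp (2 * Real.pi * Complex.I * τ) ^ (n + 1) * w) := by
  set q := Complex.exp (2 * Real.pi * Complex.I * τ) with hq
  by_cases hall : ∀ n : ℕ, 1 - q ^ (n + 1) * w ≠ 0
  · exact Complex.multipliable_of_summable_log (summable_log_factor hτ w)
  · push_neg at hall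
    obtain ⟨k, hk⟩ := hall
    exact ⟨0, hasProd_zero_of_eq_zero k hk⟩

lemma tprod_factor_ne_zero {τ : ℂ} (hτ : 0 < τ.im) (w : ℂ)
    (hall : ∀ n : ℕ, 1 - Complex.exp (2 * Real.pi * Complex.I * τ) ^ (n + 1) * w ≠ 0) :
    (∏' n : ℕ, (1 - Complex.exp (2 * Real.pi * Complex.I * τ) ^ (n + 1) * w)) ≠ 0 := by
  set q := Complex.exp (2 * Real.pi * Complex.I * τ) with hq
  have := Complex.cexp_tsum_eq_tprod (fun n => hall n) (summable_log_factor hτ w)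
  rw [← this]
  exact Complex.exp_ne_zero _


lemma one_sub_ne_zero_of_norm_lt_one {v : ℂ} (hv : ‖v‖ < 1) : (1 : ℂ) - v ≠ 0 := by
  intro h
  rw [sub_eq_zero] at h
  rw [← h] at hv
  simp at hv


noncomputable def thetaProd (τ w : ℂ) : ℂ :=
  ∏' n : ℕ, (1 - Complex.exp (2 * Real.pi * Complex.I * τ) ^ (n + 1) * w)

lemma phi_eq {τ : ℂ} (hτ : 0 < τ.im) (z : ℂ) :
    phi τ z = (Complex.exp (2 * Real.pi * Complex.I * z) - 1) *
      (thetaProd τ (Complex.exp (2 * Real.pi * Complex.I * z)) *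
        thetaProd τ ((Complex.exp (2 * Real.pi * Complex.I * z))⁻¹)) := by
  unfold phi thetaProd
  rw [Multipliable.tprod_mul (multipliable_factor hτ _) (multipliable_factor hτ _)]

lemma exp_z_add_one (z : ℂ) : Complex.exp (2 * Real.pi * Complex.I * (z + 1)) =
    Complex.exp (2 * Real.pi * Complex.I * z) := by
  rw [show 2 * (Real.pi:ℂ) * Complex.I * (z + 1) =
    2 * Real.pi * Complex.I * z + 2 * Real.pi * Complex.I by ring, Complex.exp_add,
    Complex.exp_two_pi_mul_I, mul_one]

lemma exp_z_add_tau (τ z : ℂ) : Complex.exp (2 * Real.pi * Complex.I * (z + τ)) =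
    Complex.exp (2 * Real.pi * Complex.I * τ) * Complex.exp (2 * Real.pi * Complex.I * z) := by
  rw [← Complex.exp_add]
  congr 1
  ring

lemma thetaProd_shift1 {τ : ℂ} (hτ : 0 < τ.im) (w : ℂ) :
    thetaProd τ w = (1 - Complex.exp (2 * Real.pi * Complex.I * τ) * w) *
      thetaProd τ (Complex.exp (2 * Real.pi * Complex.I * τ) * w) := by
  have hq0 : Complex.exp (2 * Real.pi * Complex.I * τ) ≠ 0 := Complex.exp_ne_zero _
  have hshift : Multipliable (fun n : ℕ =>
      1 - Complex.exp (2 * Real.pi * Complex.I * τ) ^ (n + 1 + 1) * w) := by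
    apply (multipliable_factor hτ (Complex.exp (2 * Real.pi * Complex.I * τ) * w)).congr
    intro n
    rw [pow_succ]
    ring
  have h := tprod_eq_zero_mul'
    (f := fun n : ℕ => 1 - Complex.exp (2 * Real.pi * Complex.I * τ) ^ (n + 1) * w) hshift
  rw [thetaProd, h]
  beta_reduce
  rw [pow_one]
  congr 1
  rw [thetaProd]
  exact tprod_congr fun n => by show _ = 1 - _ ^ (n+1) * _; rw [pow_succ]; ring

lemma thetaProd_shift2 {τ : ℂ} (hτ : 0 < τ.im) (w : ℂ) :
    thetaProd τ ((Complex.exp (2 * Real.pi * Complex.I * τ) * w)⁻¹) =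
      (1 - w⁻¹) * thetaProd τ w⁻¹ := by
  have hq0 : Complex.exp (2 * Real.pi * Complex.I * τ) ≠ 0 := Complex.exp_ne_zero _
  have key : ∀ n : ℕ, Complex.exp (2 * Real.pi * Complex.I * τ) ^ (n + 1) *
      (Complex.exp (2 * Real.pi * Complex.I * τ) * w)⁻¹ =
      Complex.exp (2 * Real.pi * Complex.I * τ) ^ n * w⁻¹ := by
    intro n
    rw [mul_inv, pow_succ, mul_assoc, ← mul_assoc (Complex.exp (2 * Real.pi * Complex.I * τ)),
      mul_inv_cancel₀ hq0, one_mul]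
  set g : ℕ → ℂ := fun n => 1 - Complex.exp (2 * Real.pi * Complex.I * τ) ^ n * w⁻¹ with hg
  have hgm' : Multipliable (fun n => g (n + 1)) := by
    apply (multipliable_factor hτ w⁻¹).congr
    intro n
    rfl
  have h1 : thetaProd τ ((Complex.exp (2 * Real.pi * Complex.I * τ) * w)⁻¹) = ∏' n, g n := by
    rw [thetaProd]
    exact tprod_congr fun n => by rw [hg]; rw [key n]
  rw [h1, tprod_eq_zero_mul' hgm']
  have hg0 : g 0 = 1 - w⁻¹ := by rw [hg]; norm_num
  rw [hg0]
  rfl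

lemma phi_periodic {τ : ℂ} (z : ℂ) : phi τ (z + 1) = phi τ z := by
  unfold phi
  rw [exp_z_add_one]

lemma phi_transform {τ : ℂ} (hτ : 0 < τ.im) (z : ℂ) :
    phi τ (z + τ) = -Complex.exp (-(2 * Real.pi * Complex.I * z)) * phi τ z := by
  have hw0 : Complex.exp (2 * Real.pi * Complex.I * z) ≠ 0 := Complex.exp_ne_zero _
  have hqw : Complex.exp (2 * Real.pi * Complex.I * (z + τ)) =
      Complex.exp (2 * Real.pi * Complex.I * τ) * Complex.exp (2 * Real.pi * Complex.I * z) :=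
    exp_z_add_tau τ z
  have hexpneg : Complex.exp (-(2 * Real.pi * Complex.I * z)) =
      (Complex.exp (2 * Real.pi * Complex.I * z))⁻¹ := by
    rw [Complex.exp_neg]
  rw [phi_eq hτ (z + τ), phi_eq hτ z, hqw, hexpneg,
    thetaProd_shift2 hτ (Complex.exp (2 * Real.pi * Complex.I * z)),
    thetaProd_shift1 hτ (Complex.exp (2 * Real.pi * Complex.I * z))]
  field_simp
  ring

lemma differentiable_finprod_factor (q : ℂ) (u : ℂ → ℂ) (hu : Differentiable ℂ u) (N : ℕ) :
    Differentiable ℂ (fun z => ∏ i ∈ range N, (1 - q ^ (i + 1) * u z)) := by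
  induction N with
  | zero => simpa using differentiable_const (1:ℂ)
  | succ n ih =>
    simp only [Finset.prod_range_succ]
    exact ih.mul ((differentiable_const 1).sub ((differentiable_const _).mul hu))

lemma differentiable_tprod_aux (q : ℂ) (hql : ‖q‖ < 1)
    (hmult : ∀ w : ℂ, Multipliable fun n : ℕ => 1 - q ^ (n + 1) * w)
    (hsumlog : ∀ w : ℂ, Summable fun n : ℕ => Complex.log (1 - q ^ (n + 1) * w))
    (hgeom : ∀ C : ℝ, Summable fun n : ℕ => ‖q‖ ^ (n + 1) * C)
    (u : ℂ → ℂ) (hu : Differentiable ℂ u) :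
    Differentiable ℂ (fun z => ∏' n : ℕ, (1 - q ^ (n + 1) * u z)) := by
  intro z₀
  set R : ℝ := ‖u z₀‖ + 1 with hR
  have hR0 : 0 < R := by positivity
  set s : Set ℂ := u ⁻¹' Metric.ball 0 R with hs
  have hs_open : IsOpen s := Metric.isOpen_ball.preimage hu.continuous
  have hz₀ : z₀ ∈ s := by
    simp only [hs, Set.mem_preimage, Metric.mem_ball, dist_zero_right]
    linarith [norm_nonneg (u z₀)]
  have husz : ∀ z ∈ s, ‖u z‖ ≤ R := by
    intro z hz
    simp only [hs, Set.mem_preimage, Metric.mem_ball, dist_zero_right] at hz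
    linarith
  obtain ⟨N, hN⟩ : ∃ N : ℕ, ‖q‖ ^ (N + 1) * R ≤ 1/2 := by
    have ht : Tendsto (fun k : ℕ => ‖q‖ ^ (k + 1) * R) atTop (nhds 0) :=
      (hgeom R).tendsto_atTop_zero
    exact (ht.eventually_le_const (by norm_num : (0:ℝ) < 1/2)).exists
  have key : ∀ z ∈ s, ∀ n : ℕ, ‖q ^ (n + N + 1) * u z‖ ≤ 1/2 := by
    intro z hz n
    rw [norm_mul, norm_pow]
    have h1 : ‖q‖ ^ (n + N + 1) ≤ ‖q‖ ^ (N + 1) :=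
      pow_le_pow_of_le_one (norm_nonneg _) hql.le (by omega)
    calc ‖q‖ ^ (n + N + 1) * ‖u z‖ ≤ ‖q‖ ^ (N + 1) * R :=
          mul_le_mul h1 (husz z hz) (norm_nonneg _) (pow_nonneg (norm_nonneg _) _)
      _ ≤ 1/2 := hN
  have hnz : ∀ z ∈ s, ∀ n : ℕ, 1 - q ^ (n + N + 1) * u z ≠ 0 := by
    intro z hz n
    apply one_sub_ne_zero_of_norm_lt_one
    linarith [key z hz n]
  set g : ℂ → ℂ := fun z => ∑' n : ℕ, Complex.log (1 - q ^ (n + N + 1) * u z) with hg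
  have hsum_tail : ∀ z : ℂ, Summable (fun n : ℕ => Complex.log (1 - q ^ (n + N + 1) * u z)) :=
    fun z => (summable_nat_add_iff (f := fun n : ℕ => Complex.log (1 - q ^ (n + 1) * u z)) N).mpr
      (hsumlog (u z))
  have hgd : DifferentiableOn ℂ g s := by
    have hbound : ∀ (n : ℕ) (z : ℂ), z ∈ s →
        ‖Complex.log (1 - q ^ (n + N + 1) * u z)‖ ≤ (3/2) * (‖q‖ ^ (n + N + 1) * R) := by
      intro n z hz
      have hk := key z hz n
      have hlog : ‖Complex.log (1 + -(q ^ (n + N + 1) * u z))‖ ≤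
          (3/2) * ‖-(q ^ (n + N + 1) * u z)‖ :=
        Complex.norm_log_one_add_half_le_self (by rw [norm_neg]; exact hk)
      rw [show (1 : ℂ) + -(q ^ (n + N + 1) * u z) = 1 - q ^ (n + N + 1) * u z by ring] at hlog
      apply hlog.trans
      rw [norm_neg, norm_mul, norm_pow]
      have : ‖q‖ ^ (n + N + 1) * ‖u z‖ ≤ ‖q‖ ^ (n + N + 1) * R :=
        mul_le_mul_of_nonneg_left (husz z hz) (pow_nonneg (norm_nonneg _) _)
      exact mul_le_mul_of_nonneg_left this (by norm_num)
    have hsummul : Summable (fun n : ℕ => (3/2) * (‖q‖ ^ (n + N + 1) * R)) :=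
      ((summable_nat_add_iff (f := fun n : ℕ => ‖q‖ ^ (n + 1) * R) N).mpr (hgeom R)).mul_left _
    have htlu : TendstoUniformlyOn
        (fun (t : Finset ℕ) z => ∑ n ∈ t, Complex.log (1 - q ^ (n + N + 1) * u z)) g atTop s :=
      tendstoUniformlyOn_tsum hsummul hbound
    apply htlu.tendstoLocallyUniformlyOn.differentiableOn ?_ hs_open
    apply Filter.Eventually.of_forall
    intro t
    apply DifferentiableOn.fun_sum
    intro n _ z hz
    apply DifferentiableAt.differentiableWithinAt
    apply DifferentiableAt.clog
    · exact (differentiableAt_const 1).sub ((differentiableAt_const _).mul (hu z))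
    · have hk := key z hz n
      have hre : (q ^ (n + N + 1) * u z).re ≤ ‖q ^ (n + N + 1) * u z‖ := Complex.re_le_norm _
      apply Or.inl
      simp only [Complex.sub_re, Complex.one_re]
      linarith
  have hHd : DifferentiableOn ℂ
      (fun z => (∏ i ∈ range N, (1 - q ^ (i + 1) * u z)) * Complex.exp (g z)) s :=
    by
    apply DifferentiableOn.mul
    · exact (differentiable_finprod_factor q u hu N).differentiableOn
    · exact hgd.cexp
  have heq : ∀ z ∈ s, (∏' n : ℕ, (1 - q ^ (n + 1) * u z)) =
      (∏ i ∈ range N, (1 - q ^ (i + 1) * u z)) * Complex.exp (g z) := by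
    intro z hz
    have hmult_tail : Multipliable (fun n : ℕ => 1 - q ^ (n + N + 1) * u z) :=
      Complex.multipliable_of_summable_log (hsum_tail z)
    have h1 := Multipliable.prod_mul_tprod_nat_mul' (f := fun n : ℕ => 1 - q ^ (n + 1) * u z) (k := N)
      hmult_tail
    have h2 : (∏' i : ℕ, (1 - q ^ (i + N + 1) * u z)) = Complex.exp (g z) := by
      have := Complex.cexp_tsum_eq_tprod (fun n => hnz z hz n) (hsum_tail z)
      exact this.symm
    rw [← h2, ← h1]
  have hsnhds : s ∈ nhds z₀ := hs_open.mem_nhds hz₀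
  have hev : (fun z => ∏' n : ℕ, (1 - q ^ (n + 1) * u z)) =ᶠ[nhds z₀]
      (fun z => (∏ i ∈ range N, (1 - q ^ (i + 1) * u z)) * Complex.exp (g z)) :=
    Filter.eventuallyEq_of_mem hsnhds heq
  exact (hev.differentiableAt_iff).mpr ((hHd.differentiableAt hsnhds))

lemma exp_lin_diff : Differentiable ℂ (fun z : ℂ => Complex.exp (2 * Real.pi * Complex.I * z)) :=
  Complex.differentiable_exp.comp ((differentiable_const _).mul differentiable_id)

lemma exp_lin_neg_diff :
    Differentiable ℂ (fun z : ℂ => (Complex.exp (2 * Real.pi * Complex.I * z))⁻¹) := by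
  have : (fun z : ℂ => (Complex.exp (2 * Real.pi * Complex.I * z))⁻¹) =
      fun z : ℂ => Complex.exp (-(2 * Real.pi * Complex.I * z)) := by
    funext z
    rw [Complex.exp_neg]
  rw [this]
  exact Complex.differentiable_exp.comp ((differentiable_const _).mul differentiable_id).neg

theorem phi_differentiable {τ : ℂ} (hτ : 0 < τ.im) : Differentiable ℂ (phi τ) := by
  have hval : phi τ = fun z => (Complex.exp (2 * Real.pi * Complex.I * z) - 1) *
      (thetaProd τ (Complex.exp (2 * Real.pi * Complex.I * z)) *
        thetaProd τ ((Complex.exp (2 * Real.pi * Complex.I * z))⁻¹)) := funext (phi_eq hτ)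
  rw [hval]
  apply Differentiable.mul
  · exact exp_lin_diff.sub (differentiable_const 1)
  apply Differentiable.mul
  · exact differentiable_tprod_aux _ (norm_q_lt_one hτ) (multipliable_factor hτ)
      (summable_log_factor hτ) (summable_q_geom hτ) _ exp_lin_diff
  · exact differentiable_tprod_aux _ (norm_q_lt_one hτ) (multipliable_factor hτ)
      (summable_log_factor hτ) (summable_q_geom hτ) _ exp_lin_neg_diff

theorem phi_ne_zero_at {τ : ℂ} (hτ : 0 < τ.im) : phi τ (τ / 2) ≠ 0 := by
  set r := Complex.exp (2 * Real.pi * Complex.I * (τ / 2)) with hr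
  have hr0 : r ≠ 0 := Complex.exp_ne_zero _
  have hrr : r * r = Complex.exp (2 * Real.pi * Complex.I * τ) := by
    rw [hr, ← Complex.exp_add]
    congr 1
    ring
  have hq_norm : ‖Complex.exp (2 * Real.pi * Complex.I * τ)‖ = ‖r‖ * ‖r‖ := by
    rw [← hrr, norm_mul]
  have hrlt : ‖r‖ < 1 := by
    by_contra h
    push_neg at h
    have := norm_q_lt_one hτ
    rw [hq_norm] at this
    nlinarith
  have hrpos : 0 < ‖r‖ := norm_pos_iff.mpr hr0
  have hall1 : ∀ n : ℕ, 1 - Complex.exp (2 * Real.pi * Complex.I * τ) ^ (n + 1) * r ≠ 0 := by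
    intro n
    apply one_sub_ne_zero_of_norm_lt_one
    rw [norm_mul, norm_pow]
    have h1 : ‖Complex.exp (2 * Real.pi * Complex.I * τ)‖ ^ (n+1) ≤ 1 :=
      pow_le_one₀ (norm_nonneg _) (norm_q_lt_one hτ).le
    nlinarith [pow_nonneg (norm_nonneg (Complex.exp (2 * Real.pi * Complex.I * τ))) (n+1)]
  have hall2 : ∀ n : ℕ, 1 - Complex.exp (2 * Real.pi * Complex.I * τ) ^ (n + 1) * r⁻¹ ≠ 0 := by
    intro n
    apply one_sub_ne_zero_of_norm_lt_one
    rw [norm_mul, norm_pow, norm_inv, hq_norm]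
    have key : (‖r‖ * ‖r‖) ^ (n + 1) * ‖r‖⁻¹ = ‖r‖ ^ (2 * n + 1) := by
      rw [← pow_two, ← pow_mul]
      rw [show 2 * (n + 1) = (2 * n + 1) + 1 by ring, pow_succ, mul_assoc,
        mul_inv_cancel₀ (ne_of_gt hrpos), mul_one]
    rw [key]
    exact pow_lt_one₀ (norm_nonneg _) hrlt (by omega)
  rw [phi_eq hτ]
  apply mul_ne_zero
  · rw [sub_ne_zero]
    intro h
    rw [hr, h] at hrlt
    simp at hrlt
  · exact mul_ne_zero (tprod_factor_ne_zero hτ r hall1) (tprod_factor_ne_zero hτ r⁻¹ hall2)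


end Aux

lemma exp_factor_continuous (n : ℤ) :
    Continuous (fun x : ℝ => Complex.exp (-(2 * Real.pi * Complex.I * n * x))) :=
  Complex.continuous_exp.comp ((continuous_const.mul Complex.continuous_ofReal).neg)

lemma thetaCoeff_sub_mul (f g : ℂ → ℂ) (hf : Continuous f) (hg : Continuous g) (c : ℂ) (n : ℤ) :
    thetaCoeff (fun z => f z - c * g z) n = thetaCoeff f n - c * thetaCoeff g n := by
  unfold thetaCoeff
  have hfi : IntervalIntegrable
      (fun x : ℝ => f x * Complex.exp (-(2 * Real.pi * Complex.I * n * x)))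
      MeasureTheory.volume 0 1 :=
    ((hf.comp Complex.continuous_ofReal).mul (exp_factor_continuous n)).intervalIntegrable 0 1
  have hgi : IntervalIntegrable
      (fun x : ℝ => c * (g x * Complex.exp (-(2 * Real.pi * Complex.I * n * x))))
      MeasureTheory.volume 0 1 :=
    (continuous_const.mul
      ((hg.comp Complex.continuous_ofReal).mul (exp_factor_continuous n))).intervalIntegrable 0 1
  calc (∫ x in (0:ℝ)..1, (f x - c * g x) * Complex.exp (-(2 * Real.pi * Complex.I * n * x)))
      = ∫ x in (0:ℝ)..1, (f x * Complex.exp (-(2 * Real.pi * Complex.I * n * x)) -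
          c * (g x * Complex.exp (-(2 * Real.pi * Complex.I * n * x)))) := by
        refine intervalIntegral.integral_congr fun x _ => ?_
        ring
    _ = (∫ x in (0:ℝ)..1, f x * Complex.exp (-(2 * Real.pi * Complex.I * n * x))) -
        ∫ x in (0:ℝ)..1, c * (g x * Complex.exp (-(2 * Real.pi * Complex.I * n * x))) :=
        intervalIntegral.integral_sub hfi hgi
    _ = _ := by rw [intervalIntegral.integral_const_mul]

/-- If `f` is entire with `f(z + 1) = f(z)` and
`f(z + τ) = −e^{−2πiz} f(z)` for all `z` (where `Im τ > 0`), then `f` is a constant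
multiple of `φ(τ, ·)`. -/
theorem eq_const_mul_phi_of_periodicity (τ : ℂ) (hτ : 0 < τ.im)
    (f : ℂ → ℂ) (hf : Differentiable ℂ f)
    (h1 : ∀ z : ℂ, f (z + 1) = f z)
    (h2 : ∀ z : ℂ, f (z + τ) = -Complex.exp (-(2 * Real.pi * Complex.I * z)) * f z) :
    ∃ c : ℂ, ∀ z : ℂ, f z = c * phi τ z := by
  have hΦd : Differentiable ℂ (phi τ) := phi_differentiable hτ
  have hΦ0 : thetaCoeff (phi τ) 0 ≠ 0 := by
    intro h0
    exact phi_ne_zero_at hτ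
      (eq_zero_of_thetaCoeff_eq_zero (phi τ) hΦd (fun z => phi_periodic z)
        (thetaCoeff_all_zero τ (phi τ) hΦd (fun z => phi_periodic z)
          (fun z => phi_transform hτ z) h0) (τ / 2))
  set c : ℂ := thetaCoeff f 0 / thetaCoeff (phi τ) 0 with hc
  refine ⟨c, fun z => ?_⟩
  set h : ℂ → ℂ := fun z => f z - c * phi τ z with hh
  have hhd : Differentiable ℂ h := hf.sub ((differentiable_const c).mul hΦd)
  have hh1 : ∀ z : ℂ, h (z + 1) = h z := by
    intro z
    simp only [hh]
    rw [h1 z, phi_periodic z]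
  have hh2 : ∀ z : ℂ, h (z + τ) = -Complex.exp (-(2 * Real.pi * Complex.I * z)) * h z := by
    intro z
    simp only [hh]
    rw [h2 z, phi_transform hτ z]
    ring
  have hh0 : thetaCoeff h 0 = 0 := by
    rw [hh, thetaCoeff_sub_mul f (phi τ) hf.continuous hΦd.continuous c 0, hc,
      div_mul_cancel₀ _ hΦ0, sub_self]
  have hz := eq_zero_of_thetaCoeff_eq_zero h hhd hh1
    (thetaCoeff_all_zero τ h hhd hh1 hh2 hh0) z
  simp only [hh] at hz
  exact sub_eq_zero.mp hz
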